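/- arXiv:1412.2646 — 3 statements merged into one kernel-verified Lean document; each statement's English description precedes it below -/
import Mathlib

section
/- Let μ : E → ℝ be a bounded measurable function with essential sup norm at most C_μ, and let k ≥ 0 be an integer. Then for all p, q ∈ L²(E;ℝ) one has the estimate (μ p, q)_{L²(E)} − (μ · Π⁰_k p, Π⁰_k q)_{L²(E)} ≤ ℰ_k(μ p) · ℰ_k(q) + ℰ_k(μ q) · ℰ_k(p) + C_μ · ℰ_k(p) · ℰ_k(q). -/
open MeasureTheory
open scoped RealInnerProductSpace

noncomputable section

abbrev Plane := EuclideanSpace ℝ (Fin 2)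

/-- `f` is (the restriction of) a real polynomial function on `ℝ²` of total degree at most `m`. -/
def IsPolyDeg (m : ℕ) (f : Plane → ℝ) : Prop :=
  ∃ P : MvPolynomial (Fin 2) ℝ, P.totalDegree ≤ m ∧ ∀ x, f x = MvPolynomial.eval (fun i => x i) P

/-- `Pf` is the `L²(E)`-orthogonal projection of `f` onto the space of polynomial
functions of total degree `≤ m`: it is such a polynomial and the error is
`L²(E)`-orthogonal to all such polynomials. -/
def IsL2Proj (E : Set Plane) (m : ℕ) (f Pf : Plane → ℝ) : Prop :=
  IsPolyDeg m Pf ∧ ∀ g : Plane → ℝ, IsPolyDeg m g → ∫ x in E, (f x - Pf x) * g x = 0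

/-- Componentwise `L²(E)`-projection for `ℝ²`-valued functions. -/
def IsL2ProjV (E : Set Plane) (m : ℕ) (f Pf : Plane → Plane) : Prop :=
  ∀ i : Fin 2, IsL2Proj E m (fun x => f x i) (fun x => Pf x i)

/-- `ℰ_m(f) = ‖f - Π⁰_m f‖_{L²(E)}` for a scalar function, where `Pf = Π⁰_m f`. -/
def errS (E : Set Plane) (f Pf : Plane → ℝ) : ℝ :=
  Real.sqrt (∫ x in E, (f x - Pf x) ^ 2)

/-- `ℰ_m(f) = ‖f - Π⁰_m f‖_{L²(E)}` for an `ℝ²`-valued function, where `Pf = Π⁰_m f`. -/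
def errV (E : Set Plane) (f Pf : Plane → Plane) : ℝ :=
  Real.sqrt (∫ x in E, ‖f x - Pf x‖ ^ 2)

/-- `L²(E)` norm of a scalar function. -/
def l2normS (E : Set Plane) (f : Plane → ℝ) : ℝ :=
  Real.sqrt (∫ x in E, (f x) ^ 2)

/-- `L²(E)` norm of an `ℝ²`-valued function. -/
def l2normV (E : Set Plane) (f : Plane → Plane) : ℝ :=
  Real.sqrt (∫ x in E, ‖f x‖ ^ 2)

lemma isPolyDeg_memLp {E : Set Plane} (hEb : Bornology.IsBounded E)
    (hEm : MeasurableSet E) {m : ℕ} {g : Plane → ℝ} (hg : IsPolyDeg m g) :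
    MemLp g 2 (volume.restrict E) := by
  obtain ⟨P, -, hP⟩ := hg
  have hc : Continuous g := by
    have h : Continuous fun y : Fin 2 → ℝ => MvPolynomial.eval y P :=
      MvPolynomial.continuous_eval P
    have : g = fun x : Plane => MvPolynomial.eval (fun i => x i) P := funext hP
    rw [this]
    exact h.comp (continuous_pi fun i => (EuclideanSpace.proj i : Plane →L[ℝ] ℝ).continuous)
  have hK : IsCompact (closure E) := hEb.isCompact_closure
  obtain ⟨C, hC⟩ := hK.exists_bound_of_continuousOn hc.continuousOn
  haveI : IsFiniteMeasure (volume.restrict E) :=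
    ⟨by simpa [Measure.restrict_apply_univ] using hEb.measure_lt_top⟩
  refine MemLp.of_bound hc.aestronglyMeasurable C ?_
  filter_upwards [ae_restrict_mem hEm] with x hx
  exact hC x (subset_closure hx)

lemma int_mul {ν : Measure Plane} {u v : Plane → ℝ}
    (hu : MemLp u 2 ν) (hv : MemLp v 2 ν) :
    Integrable (fun x => u x * v x) ν := by
  have h : MemLp (u • v) 1 ν := hv.smul hu
  exact memLp_one_iff_integrable.mp h

lemma cs_abs {ν : Measure Plane} {u v : Plane → ℝ}
    (hu : MemLp u 2 ν) (hv : MemLp v 2 ν) :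
    ∫ x, |u x| * |v x| ∂ν ≤ Real.sqrt (∫ x, u x ^ 2 ∂ν) * Real.sqrt (∫ x, v x ^ 2 ∂ν) := by
  have h2 : (2:ℝ).HolderConjugate 2 := ⟨by norm_num, by norm_num, by norm_num⟩
  have ho : ENNReal.ofReal (2:ℝ) = 2 := by norm_num
  have hu' : MemLp (fun x => |u x|) (ENNReal.ofReal 2) ν := by
    rw [ho]; simpa [Real.norm_eq_abs] using hu.norm
  have hv' : MemLp (fun x => |v x|) (ENNReal.ofReal 2) ν := by
    rw [ho]; simpa [Real.norm_eq_abs] using hv.norm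
  have := integral_mul_le_Lp_mul_Lq_of_nonneg h2
    (Filter.Eventually.of_forall fun x => abs_nonneg (u x))
    (Filter.Eventually.of_forall fun x => abs_nonneg (v x)) hu' hv'
  calc ∫ x, |u x| * |v x| ∂ν
      ≤ (∫ x, |u x| ^ (2:ℝ) ∂ν) ^ (1/(2:ℝ)) * (∫ x, |v x| ^ (2:ℝ) ∂ν) ^ (1/(2:ℝ)) := this
    _ = Real.sqrt (∫ x, u x ^ 2 ∂ν) * Real.sqrt (∫ x, v x ^ 2 ∂ν) := by
        have eu : ∀ x, |u x| ^ (2:ℝ) = u x ^ 2 := fun x => by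
          rw [show ((2:ℝ)) = ((2:ℕ):ℝ) by norm_num, Real.rpow_natCast, sq_abs]
        have ev : ∀ x, |v x| ^ (2:ℝ) = v x ^ 2 := fun x => by
          rw [show ((2:ℝ)) = ((2:ℕ):ℝ) by norm_num, Real.rpow_natCast, sq_abs]
        simp_rw [eu, ev, Real.sqrt_eq_rpow]

lemma cs {ν : Measure Plane} {u v : Plane → ℝ}
    (hu : MemLp u 2 ν) (hv : MemLp v 2 ν) :
    ∫ x, u x * v x ∂ν ≤ Real.sqrt (∫ x, u x ^ 2 ∂ν) * Real.sqrt (∫ x, v x ^ 2 ∂ν) := by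
  refine le_trans ?_ (cs_abs hu hv)
  refine integral_mono (int_mul hu hv) ?_ fun x => by
    simpa [abs_mul] using le_abs_self (u x * v x)
  simpa [abs_mul] using (int_mul hu hv).abs

/-- Lemma 5.3 of the paper: for a bounded measurable `μ` with
essential sup norm at most `Cμ` on `E`, and `p, q ∈ L²(E)`,
`(μp, q) − (μ Π⁰_k p, Π⁰_k q) ≤ ℰ_k(μp)ℰ_k(q) + ℰ_k(μq)ℰ_k(p) + Cμ ℰ_k(p)ℰ_k(q)`. -/
theorem statement0
    (E : Set Plane) (hEopen : IsOpen E) (hEbdd : Bornology.IsBounded E)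
    (hEpos : 0 < volume E)
    (μ : Plane → ℝ) (Cμ : ℝ) (hμmeas : Measurable μ)
    (hμbdd : ∀ᵐ x ∂(volume.restrict E), |μ x| ≤ Cμ)
    (k : ℕ)
    (p q : Plane → ℝ)
    (hp : MemLp p 2 (volume.restrict E)) (hq : MemLp q 2 (volume.restrict E))
    (Pp Pq Pμp Pμq : Plane → ℝ)
    (hPp : IsL2Proj E k p Pp) (hPq : IsL2Proj E k q Pq)
    (hPμp : IsL2Proj E k (fun x => μ x * p x) Pμp)
    (hPμq : IsL2Proj E k (fun x => μ x * q x) Pμq) :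
    (∫ x in E, μ x * p x * q x) - (∫ x in E, μ x * Pp x * Pq x) ≤
      errS E (fun x => μ x * p x) Pμp * errS E q Pq
        + errS E (fun x => μ x * q x) Pμq * errS E p Pp
        + Cμ * errS E p Pp * errS E q Pq := by
  have hEm : MeasurableSet E := hEopen.measurableSet
  set ν := volume.restrict E with hν
  -- Cμ ≥ 0
  have hν0 : ν ≠ 0 := by
    rw [hν, Ne, Measure.restrict_eq_zero]
    exact hEpos.ne'
  have hCμ0 : 0 ≤ Cμ := by
    haveI : (ae ν).NeBot := ae_neBot.mpr hν0
    obtain ⟨x, hx⟩ := hμbdd.exists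
    exact (abs_nonneg _).trans hx
  -- L² memberships
  have hPpL : MemLp Pp 2 ν := isPolyDeg_memLp hEbdd hEm hPp.1
  have hPqL : MemLp Pq 2 ν := isPolyDeg_memLp hEbdd hEm hPq.1
  have hPμpL : MemLp Pμp 2 ν := isPolyDeg_memLp hEbdd hEm hPμp.1
  have hPμqL : MemLp Pμq 2 ν := isPolyDeg_memLp hEbdd hEm hPμq.1
  have hμsm : AEStronglyMeasurable μ ν := hμmeas.aestronglyMeasurable
  have hmul : ∀ {f : Plane → ℝ}, MemLp f 2 ν → MemLp (fun x => μ x * f x) 2 ν := by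
    intro f hf
    refine MemLp.of_le_mul (c := Cμ) hf (hμsm.mul hf.1) ?_
    filter_upwards [hμbdd] with x hx
    simp only [Real.norm_eq_abs, abs_mul]
    exact mul_le_mul_of_nonneg_right hx (abs_nonneg _)
  have hμp : MemLp (fun x => μ x * p x) 2 ν := hmul hp
  have hμq : MemLp (fun x => μ x * q x) 2 ν := hmul hq
  have ha : MemLp (fun x => p x - Pp x) 2 ν := hp.sub hPpL
  have hb : MemLp (fun x => q x - Pq x) 2 ν := hq.sub hPqL
  have hA : MemLp (fun x => μ x * p x - Pμp x) 2 ν := hμp.sub hPμpL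
  have hG : MemLp (fun x => μ x * q x - Pμq x) 2 ν := hμq.sub hPμqL
  have hμa : MemLp (fun x => μ x * (p x - Pp x)) 2 ν := hmul ha
  -- orthogonality
  have o2 : ∫ x, (p x - Pp x) * Pμq x ∂ν = 0 := hPp.2 Pμq hPμq.1
  have o3 : ∫ x, (q x - Pq x) * Pμp x ∂ν = 0 := hPq.2 Pμp hPμp.1
  -- integrabilities
  have e1 : Integrable (fun x => (μ x * p x - Pμp x) * (q x - Pq x)) ν := int_mul hA hb
  have e2 : Integrable (fun x => (p x - Pp x) * (μ x * q x - Pμq x)) ν := int_mul ha hG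
  have e3 : Integrable (fun x => μ x * (p x - Pp x) * (q x - Pq x)) ν := int_mul hμa hb
  have e4 : Integrable (fun x => (q x - Pq x) * Pμp x) ν := int_mul hb hPμpL
  have e5 : Integrable (fun x => (p x - Pp x) * Pμq x) ν := int_mul ha hPμqL
  have h1 : Integrable (fun x => μ x * p x * q x) ν := int_mul hμp hq
  have h2 : Integrable (fun x => μ x * Pp x * Pq x) ν := int_mul (hmul hPpL) hPqL
  -- key identity
  have key : (∫ x, μ x * p x * q x ∂ν) - (∫ x, μ x * Pp x * Pq x ∂ν)
      = (∫ x, (μ x * p x - Pμp x) * (q x - Pq x) ∂ν)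
        + (∫ x, (p x - Pp x) * (μ x * q x - Pμq x) ∂ν)
        - ∫ x, μ x * (p x - Pp x) * (q x - Pq x) ∂ν := by
    have expand : (fun x => μ x * p x * q x - μ x * Pp x * Pq x)
        = fun x => (μ x * p x - Pμp x) * (q x - Pq x)
            + (p x - Pp x) * (μ x * q x - Pμq x)
            - μ x * (p x - Pp x) * (q x - Pq x)
            + (q x - Pq x) * Pμp x + (p x - Pp x) * Pμq x := by
      funext x; ring
    have e12 : Integrable (fun x => (μ x * p x - Pμp x) * (q x - Pq x)
        + (p x - Pp x) * (μ x * q x - Pμq x)) ν := e1.add e2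
    have e123 : Integrable (fun x => (μ x * p x - Pμp x) * (q x - Pq x)
        + (p x - Pp x) * (μ x * q x - Pμq x)
        - μ x * (p x - Pp x) * (q x - Pq x)) ν := e12.sub e3
    have e1234 : Integrable (fun x => (μ x * p x - Pμp x) * (q x - Pq x)
        + (p x - Pp x) * (μ x * q x - Pμq x)
        - μ x * (p x - Pp x) * (q x - Pq x)
        + (q x - Pq x) * Pμp x) ν := e123.add e4
    rw [← integral_sub h1 h2, expand,
      integral_add e1234 e5, integral_add e123 e4,
      integral_sub e12 e3, integral_add e1 e2, o3, o2]
    ring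
  -- bounds
  have b1 : (∫ x, (μ x * p x - Pμp x) * (q x - Pq x) ∂ν)
      ≤ errS E (fun x => μ x * p x) Pμp * errS E q Pq := by
    simp only [errS]; exact cs hA hb
  have b2 : (∫ x, (p x - Pp x) * (μ x * q x - Pμq x) ∂ν)
      ≤ errS E p Pp * errS E (fun x => μ x * q x) Pμq := by
    simp only [errS]; exact cs ha hG
  have b3 : -(∫ x, μ x * (p x - Pp x) * (q x - Pq x) ∂ν)
      ≤ Cμ * (errS E p Pp * errS E q Pq) := by
    have step1 : -(∫ x, μ x * (p x - Pp x) * (q x - Pq x) ∂ν)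
        ≤ ∫ x, |μ x * (p x - Pp x) * (q x - Pq x)| ∂ν := by
      rw [← integral_neg]
      exact integral_mono e3.neg e3.abs fun x => neg_le_abs _
    have step2 : (∫ x, |μ x * (p x - Pp x) * (q x - Pq x)| ∂ν)
        ≤ ∫ x, Cμ * (|p x - Pp x| * |q x - Pq x|) ∂ν := by
      refine integral_mono_ae e3.abs ?_ ?_
      · have : Integrable (fun x => |(p x - Pp x) * (q x - Pq x)|) ν := (int_mul ha hb).abs
        simpa [abs_mul] using this.const_mul Cμ
      · filter_upwards [hμbdd] with x hx
        rw [abs_mul, abs_mul, ← mul_assoc]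
        exact mul_le_mul_of_nonneg_right
          (mul_le_mul_of_nonneg_right hx (abs_nonneg _)) (abs_nonneg _)
    have step3 : (∫ x, Cμ * (|p x - Pp x| * |q x - Pq x|) ∂ν)
        ≤ Cμ * (errS E p Pp * errS E q Pq) := by
      rw [integral_const_mul]
      simp only [errS]
      exact mul_le_mul_of_nonneg_left (cs_abs ha hb) hCμ0
    exact step1.trans (step2.trans step3)
  have lhs_eq : (∫ x in E, μ x * p x * q x) - (∫ x in E, μ x * Pp x * Pq x)
      = (∫ x, μ x * p x * q x ∂ν) - (∫ x, μ x * Pp x * Pq x ∂ν) := rfl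
  rw [lhs_eq, key]
  have := add_le_add (add_le_add b1 b2) b3
  calc (∫ x, (μ x * p x - Pμp x) * (q x - Pq x) ∂ν)
        + (∫ x, (p x - Pp x) * (μ x * q x - Pμq x) ∂ν)
        - ∫ x, μ x * (p x - Pp x) * (q x - Pq x) ∂ν
      ≤ errS E (fun x => μ x * p x) Pμp * errS E q Pq
          + errS E p Pp * errS E (fun x => μ x * q x) Pμq
          + Cμ * (errS E p Pp * errS E q Pq) := by
        have := add_le_add (add_le_add b1 b2) b3; linarith
    _ = errS E (fun x => μ x * p x) Pμp * errS E q Pq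
        + errS E (fun x => μ x * q x) Pμq * errS E p Pp
        + Cμ * errS E p Pp * errS E q Pq := by ring
end
end

section
/- Let γ : E → ℝ be a bounded measurable function with essential sup norm at most γ_max, and let k ≥ 1 be an integer. For p, q ∈ L²(E;ℝ) set c(p,q) := ∫_E γ p q dx and c_h(p,q) := ∫_E γ (Π⁰_{k−1} p)(Π⁰_{k−1} q) dx. Then c_h(p,q) − c(p,q) ≤ ℰ_{k−1}(γ p) · ℰ_{k−1}(q) + ℰ_{k−1}(γ q) · ℰ_{k−1}(p) + γ_max · ℰ_{k−1}(p) · ℰ_{k−1}(q). -/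
open MeasureTheory
open scoped RealInnerProductSpace

noncomputable section

lemma aux_integrable_mul {α : Type*} [MeasurableSpace α] {μ : Measure α} {f g : α → ℝ}
    (hf : MemLp f 2 μ) (hg : MemLp g 2 μ) : Integrable (fun x => f x * g x) μ := by
  have h := L2.integrable_inner (𝕜 := ℝ) (hf.toLp f) (hg.toLp g)
  refine h.congr ?_
  filter_upwards [hf.coeFn_toLp, hg.coeFn_toLp] with x hx hy
  simp [hx, hy, RCLike.inner_apply, mul_comm]

lemma aux_cauchy_schwarz {α : Type*} [MeasurableSpace α] {μ : Measure α} {f g : α → ℝ}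
    (hf : MemLp f 2 μ) (hg : MemLp g 2 μ) :
    ∫ x, f x * g x ∂μ ≤ Real.sqrt (∫ x, f x ^ 2 ∂μ) * Real.sqrt (∫ x, g x ^ 2 ∂μ) := by
  set F := hf.toLp f
  set G := hg.toLp g
  have h1 : ∫ x, f x * g x ∂μ = (@inner ℝ _ _ F G) := by
    rw [L2.inner_def]
    refine integral_congr_ae ?_
    filter_upwards [hf.coeFn_toLp, hg.coeFn_toLp] with x hx hy
    simp [F, G, hx, hy, RCLike.inner_apply, mul_comm]
  have h2 : Real.sqrt (∫ x, f x ^ 2 ∂μ) = ‖F‖ := by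
    have : (@inner ℝ _ _ F F) = ∫ x, f x ^ 2 ∂μ := by
      rw [L2.inner_def]
      refine integral_congr_ae ?_
      filter_upwards [hf.coeFn_toLp] with x hx
      simp [F, hx, RCLike.inner_apply, sq]
    rw [← this, real_inner_self_eq_norm_sq, Real.sqrt_sq (norm_nonneg _)]
  have h3 : Real.sqrt (∫ x, g x ^ 2 ∂μ) = ‖G‖ := by
    have : (@inner ℝ _ _ G G) = ∫ x, g x ^ 2 ∂μ := by
      rw [L2.inner_def]
      refine integral_congr_ae ?_
      filter_upwards [hg.coeFn_toLp] with x hx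
      simp [G, hx, RCLike.inner_apply, sq]
    rw [← this, real_inner_self_eq_norm_sq, Real.sqrt_sq (norm_nonneg _)]
  rw [h1, h2, h3]
  exact real_inner_le_norm F G

lemma IsPolyDeg.continuous {m : ℕ} {f : Plane → ℝ} (hf : IsPolyDeg m f) : Continuous f := by
  obtain ⟨P, -, hP⟩ := hf
  have : f = fun x => MvPolynomial.eval (fun i => x i) P := funext hP
  rw [this]
  exact P.continuous_eval.comp (continuous_pi fun i => (EuclideanSpace.proj i).continuous)

lemma aux_poly_memL2 {E : Set Plane} (hEmeas : MeasurableSet E) (hEbdd : Bornology.IsBounded E)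
    [IsFiniteMeasure (volume.restrict E)]
    {f : Plane → ℝ} (hf : Continuous f) : MemLp f 2 (volume.restrict E) := by
  obtain ⟨C, hC⟩ := hEbdd.isCompact_closure.exists_bound_of_continuousOn hf.continuousOn
  refine MemLp.of_bound hf.aestronglyMeasurable C ?_
  filter_upwards [ae_restrict_mem hEmeas] with x hx
  exact hC x (subset_closure hx)


/-- estimate (5.11) of the paper: for the reaction forms
`c(p,q) = ∫_E γ p q` and `c_h(p,q) = ∫_E γ (Π⁰_{k−1} p)(Π⁰_{k−1} q)`,
`c_h(p,q) − c(p,q) ≤ ℰ_{k−1}(γp)ℰ_{k−1}(q) + ℰ_{k−1}(γq)ℰ_{k−1}(p) + γmax ℰ_{k−1}(p)ℰ_{k−1}(q)`. -/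
theorem statement2
    (E : Set Plane) (hEopen : IsOpen E) (hEbdd : Bornology.IsBounded E)
    (hEpos : 0 < volume E)
    (γ : Plane → ℝ) (γmax : ℝ) (hγmeas : Measurable γ)
    (hγbdd : ∀ᵐ x ∂(volume.restrict E), |γ x| ≤ γmax)
    (k : ℕ) (hk : 1 ≤ k)
    (p q : Plane → ℝ)
    (hp : MemLp p 2 (volume.restrict E)) (hq : MemLp q 2 (volume.restrict E))
    (Pp Pq Pγp Pγq : Plane → ℝ)
    (hPp : IsL2Proj E (k - 1) p Pp) (hPq : IsL2Proj E (k - 1) q Pq)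
    (hPγp : IsL2Proj E (k - 1) (fun x => γ x * p x) Pγp)
    (hPγq : IsL2Proj E (k - 1) (fun x => γ x * q x) Pγq) :
    (∫ x in E, γ x * Pp x * Pq x) - (∫ x in E, γ x * p x * q x) ≤
      errS E (fun x => γ x * p x) Pγp * errS E q Pq
        + errS E (fun x => γ x * q x) Pγq * errS E p Pp
        + γmax * errS E p Pp * errS E q Pq := by

  have hEmeas : MeasurableSet E := hEopen.measurableSet
  haveI : IsFiniteMeasure (volume.restrict E) :=
    ⟨by rw [Measure.restrict_apply_univ]; exact hEbdd.measure_lt_top⟩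
  -- γmax is nonnegative
  have hγmax0 : 0 ≤ γmax := by
    have hne : volume.restrict E ≠ 0 := by
      intro h
      have h2 : (volume.restrict E) Set.univ = volume E := Measure.restrict_apply_univ E
      rw [h] at h2
      simp at h2
      exact hEpos.ne' h2.symm
    haveI : (ae (volume.restrict E)).NeBot := ae_neBot.mpr hne
    obtain ⟨x, hx⟩ := hγbdd.exists
    exact (abs_nonneg _).trans hx
  -- multiplication by γ preserves membership in L²
  have hbound : ∀ f : Plane → ℝ, MemLp f 2 (volume.restrict E) →
      MemLp (fun x => γ x * f x) 2 (volume.restrict E) := by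
    intro f hf
    refine MemLp.of_le (hf.const_mul γmax)
      (hγmeas.aestronglyMeasurable.mul hf.aestronglyMeasurable) ?_
    filter_upwards [hγbdd] with x hx
    simp only [norm_mul, Real.norm_eq_abs]
    calc |γ x| * |f x| ≤ γmax * |f x| := mul_le_mul_of_nonneg_right hx (abs_nonneg _)
      _ ≤ |γmax| * |f x| := mul_le_mul_of_nonneg_right (le_abs_self _) (abs_nonneg _)
  -- L² membership of all relevant functions
  have hPpL2 : MemLp Pp 2 (volume.restrict E) := aux_poly_memL2 hEmeas hEbdd hPp.1.continuous
  have hPqL2 : MemLp Pq 2 (volume.restrict E) := aux_poly_memL2 hEmeas hEbdd hPq.1.continuous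
  have hPγpL2 : MemLp Pγp 2 (volume.restrict E) := aux_poly_memL2 hEmeas hEbdd hPγp.1.continuous
  have hPγqL2 : MemLp Pγq 2 (volume.restrict E) := aux_poly_memL2 hEmeas hEbdd hPγq.1.continuous
  have hγpL2 : MemLp (fun x => γ x * p x) 2 (volume.restrict E) := hbound p hp
  have hγqL2 : MemLp (fun x => γ x * q x) 2 (volume.restrict E) := hbound q hq
  have hep : MemLp (fun x => p x - Pp x) 2 (volume.restrict E) := hp.sub hPpL2
  have heq : MemLp (fun x => q x - Pq x) 2 (volume.restrict E) := hq.sub hPqL2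
  have hγep : MemLp (fun x => γ x * (p x - Pp x)) 2 (volume.restrict E) := hbound _ hep
  have hrp : MemLp (fun x => γ x * p x - Pγp x) 2 (volume.restrict E) := hγpL2.sub hPγpL2
  have hrq : MemLp (fun x => γ x * q x - Pγq x) 2 (volume.restrict E) := hγqL2.sub hPγqL2
  -- integrability of all products
  have iA : Integrable (fun x => (-(γ x * p x - Pγp x)) * (q x - Pq x)) (volume.restrict E) :=
    aux_integrable_mul hrp.neg heq
  have iB : Integrable (fun x => (-(γ x * q x - Pγq x)) * (p x - Pp x)) (volume.restrict E) :=
    aux_integrable_mul hrq.neg hep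
  have iC : Integrable (fun x => (γ x * (p x - Pp x)) * (q x - Pq x)) (volume.restrict E) :=
    aux_integrable_mul hγep heq
  have iD : Integrable (fun x => (q x - Pq x) * Pγp x) (volume.restrict E) :=
    aux_integrable_mul heq hPγpL2
  have iE : Integrable (fun x => (p x - Pp x) * Pγq x) (volume.restrict E) :=
    aux_integrable_mul hep hPγqL2
  have i1 : Integrable (fun x => γ x * Pp x * Pq x) (volume.restrict E) :=
    aux_integrable_mul (hbound Pp hPpL2) hPqL2
  have i2 : Integrable (fun x => γ x * p x * q x) (volume.restrict E) :=
    aux_integrable_mul hγpL2 hq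
  have iD' : Integrable (fun x => -((q x - Pq x) * Pγp x)) (volume.restrict E) := iD.neg
  have iE' : Integrable (fun x => -((p x - Pp x) * Pγq x)) (volume.restrict E) := iE.neg
  have iAB : Integrable (fun x => (-(γ x * p x - Pγp x)) * (q x - Pq x)
      + (-(γ x * q x - Pγq x)) * (p x - Pp x)) (volume.restrict E) := iA.add iB
  have iABC : Integrable (fun x => (-(γ x * p x - Pγp x)) * (q x - Pq x)
      + (-(γ x * q x - Pγq x)) * (p x - Pp x)
      + (γ x * (p x - Pp x)) * (q x - Pq x)) (volume.restrict E) := iAB.add iC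
  have iABCD : Integrable (fun x => (-(γ x * p x - Pγp x)) * (q x - Pq x)
      + (-(γ x * q x - Pγq x)) * (p x - Pp x)
      + (γ x * (p x - Pp x)) * (q x - Pq x)
      + (-((q x - Pq x) * Pγp x))) (volume.restrict E) := iABC.add iD'
  -- key algebraic identity
  have key : (∫ x in E, γ x * Pp x * Pq x) - (∫ x in E, γ x * p x * q x)
      = (∫ x in E, (-(γ x * p x - Pγp x)) * (q x - Pq x))
        + (∫ x in E, (-(γ x * q x - Pγq x)) * (p x - Pp x))
        + (∫ x in E, (γ x * (p x - Pp x)) * (q x - Pq x))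
        + (∫ x in E, (-((q x - Pq x) * Pγp x)))
        + (∫ x in E, (-((p x - Pp x) * Pγq x))) := by
    rw [← integral_sub i1 i2]
    calc ∫ x in E, (γ x * Pp x * Pq x - γ x * p x * q x)
        = ∫ x in E, ((-(γ x * p x - Pγp x)) * (q x - Pq x)
            + (-(γ x * q x - Pγq x)) * (p x - Pp x)
            + (γ x * (p x - Pp x)) * (q x - Pq x)
            + (-((q x - Pq x) * Pγp x))
            + (-((p x - Pp x) * Pγq x))) :=
          integral_congr_ae (Filter.Eventually.of_forall fun x => by ring)
      _ = _ := by
          rw [integral_add iABCD iE', integral_add iABC iD',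
            integral_add iAB iC, integral_add iA iB]
  -- the orthogonality terms vanish
  have hD0 : (∫ x in E, (-((q x - Pq x) * Pγp x))) = 0 := by
    rw [integral_neg, hPq.2 Pγp hPγp.1, neg_zero]
  have hE0 : (∫ x in E, (-((p x - Pp x) * Pγq x))) = 0 := by
    rw [integral_neg, hPp.2 Pγq hPγq.1, neg_zero]
  -- bounds on the three remaining terms
  have hA : (∫ x in E, (-(γ x * p x - Pγp x)) * (q x - Pq x))
      ≤ errS E (fun x => γ x * p x) Pγp * errS E q Pq := by
    have h := aux_cauchy_schwarz (μ := volume.restrict E)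
      (f := fun x => -(γ x * p x - Pγp x)) (g := fun x => q x - Pq x) hrp.neg heq
    refine h.trans (le_of_eq ?_)
    unfold errS
    congr 2
    exact integral_congr_ae (Filter.Eventually.of_forall fun x => by ring)
  have hB : (∫ x in E, (-(γ x * q x - Pγq x)) * (p x - Pp x))
      ≤ errS E (fun x => γ x * q x) Pγq * errS E p Pp := by
    have h := aux_cauchy_schwarz (μ := volume.restrict E)
      (f := fun x => -(γ x * q x - Pγq x)) (g := fun x => p x - Pp x) hrq.neg hep
    refine h.trans (le_of_eq ?_)
    unfold errS
    congr 2
    exact integral_congr_ae (Filter.Eventually.of_forall fun x => by ring)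
  have hC : (∫ x in E, (γ x * (p x - Pp x)) * (q x - Pq x))
      ≤ γmax * errS E p Pp * errS E q Pq := by
    have habs : Integrable (fun x => γmax * (|p x - Pp x| * |q x - Pq x|)) (volume.restrict E) :=
      (aux_integrable_mul hep.abs heq.abs).const_mul γmax
    have h1 : (∫ x in E, (γ x * (p x - Pp x)) * (q x - Pq x))
        ≤ ∫ x in E, γmax * (|p x - Pp x| * |q x - Pq x|) := by
      refine integral_mono_ae iC habs ?_
      filter_upwards [hγbdd] with x hx
      calc γ x * (p x - Pp x) * (q x - Pq x)
          ≤ |γ x * (p x - Pp x) * (q x - Pq x)| := le_abs_self _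
        _ = |γ x| * (|p x - Pp x| * |q x - Pq x|) := by rw [abs_mul, abs_mul, mul_assoc]
        _ ≤ γmax * (|p x - Pp x| * |q x - Pq x|) :=
            mul_le_mul_of_nonneg_right hx (by positivity)
    have h2 : ∫ x in E, γmax * (|p x - Pp x| * |q x - Pq x|)
        = γmax * ∫ x in E, |p x - Pp x| * |q x - Pq x| := integral_const_mul _ _
    have h3 : ∫ x in E, |p x - Pp x| * |q x - Pq x|
        ≤ Real.sqrt (∫ x in E, |p x - Pp x| ^ 2) * Real.sqrt (∫ x in E, |q x - Pq x| ^ 2) :=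
      aux_cauchy_schwarz hep.abs heq.abs
    calc (∫ x in E, (γ x * (p x - Pp x)) * (q x - Pq x))
        ≤ γmax * ∫ x in E, |p x - Pp x| * |q x - Pq x| := by rw [← h2]; exact h1
      _ ≤ γmax * (Real.sqrt (∫ x in E, |p x - Pp x| ^ 2)
            * Real.sqrt (∫ x in E, |q x - Pq x| ^ 2)) :=
          mul_le_mul_of_nonneg_left h3 hγmax0
      _ = γmax * errS E p Pp * errS E q Pq := by
          simp [errS, sq_abs, mul_assoc]
  rw [key, hD0, hE0, add_zero, add_zero]
  exact add_le_add (add_le_add hA hB) hC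
end
end

section
/- Let k ≥ 1 be an integer and let q be a real polynomial in one variable of degree at most k with q(0) = 0 and q(1) = 0, such that ∫₀¹ q(x) p(x) dx = 0 for every real polynomial p of degree at most k − 2 (this condition is vacuous for k = 1). Then q is the zero polynomial. -/
open intervalIntegral

/-- edge unisolvence underlying the VEM degrees of freedom: a real
univariate polynomial `q` of degree at most `k` with `q(0) = q(1) = 0` whose moments
`∫₀¹ q p` vanish against every polynomial `p` of degree at most `k − 2` is the zero
polynomial.  (The moment condition is vacuous for `k = 1`.) -/
theorem statement8
    (k : ℕ) (hk : 1 ≤ k) (q : Polynomial ℝ)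
    (hdeg : q.natDegree ≤ k)
    (h0 : q.eval 0 = 0) (h1 : q.eval 1 = 0)
    (hmom : ∀ p : Polynomial ℝ, (p.natDegree : ℤ) ≤ (k : ℤ) - 2 →
      ∫ x in (0 : ℝ)..1, q.eval x * p.eval x = 0) :
    q = 0 := by
  -- factor out (X - 1)
  obtain ⟨r₁, hr₁⟩ : (Polynomial.X - Polynomial.C (1:ℝ)) ∣ q :=
    Polynomial.dvd_iff_isRoot.mpr h1
  -- factor out X from r₁
  have hr₁0 : r₁.eval 0 = 0 := by
    have := h0
    rw [hr₁] at this
    simp at this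
    linarith [this]
  obtain ⟨r, hr⟩ : Polynomial.X ∣ r₁ := by
    rw [Polynomial.X_dvd_iff, Polynomial.coeff_zero_eq_eval_zero]
    exact hr₁0
  have hq : q = (Polynomial.X - Polynomial.C 1) * (Polynomial.X * r) := by
    rw [hr₁, hr]
  by_cases hrz : r = 0
  · rw [hq, hrz, mul_zero, mul_zero]
  -- degree bound on r
  have hX0 : (Polynomial.X : Polynomial ℝ) ≠ 0 := Polynomial.X_ne_zero
  have hXr : Polynomial.X * r ≠ 0 := mul_ne_zero hX0 hrz
  have hXC : (Polynomial.X - Polynomial.C (1:ℝ)) ≠ 0 := Polynomial.X_sub_C_ne_zero 1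
  have hdq : q.natDegree = 2 + r.natDegree := by
    rw [hq, Polynomial.natDegree_mul hXC hXr, Polynomial.natDegree_mul hX0 hrz,
      Polynomial.natDegree_X_sub_C, Polynomial.natDegree_X]
    omega
  have hrd : (r.natDegree : ℤ) ≤ (k : ℤ) - 2 := by
    have : 2 + r.natDegree ≤ k := hdq ▸ hdeg
    omega
  -- moment condition against r
  have hI := hmom r hrd
  set s : Polynomial ℝ := q * r with hs
  have hseval : ∀ x : ℝ, s.eval x = q.eval x * r.eval x := by
    intro x; simp [hs]
  have hI' : ∫ x in (0:ℝ)..1, s.eval x = 0 := by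
    simpa [hseval] using hI
  set F : ℝ → ℝ := fun x => -(s.eval x) with hF
  have hFcont : Continuous F := (s.continuous_aeval).neg
  have hIF : ∫ x in Set.Ioc (0:ℝ) 1, F x = 0 := by
    have : ∫ x in (0:ℝ)..1, F x = 0 := by
      simp only [hF]
      rw [intervalIntegral.integral_neg, hI', neg_zero]
    rwa [intervalIntegral.integral_of_le (by norm_num)] at this
  have hFnn : ∀ x ∈ Set.Ioc (0:ℝ) 1, 0 ≤ F x := by
    intro x hx
    have hx0 : (0:ℝ) < x := hx.1
    have hx1 : x ≤ 1 := hx.2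
    have heq : s.eval x = (x - 1) * (x * r.eval x) * r.eval x := by
      rw [hseval, hq]
      simp only [Polynomial.eval_mul, Polynomial.eval_sub, Polynomial.eval_X,
        Polynomial.eval_one, Polynomial.eval_C]
    have key : 0 ≤ (1 - x) * x * (r.eval x * r.eval x) :=
      mul_nonneg (mul_nonneg (by linarith) hx0.le) (mul_self_nonneg _)
    rw [hF]
    simp only
    rw [heq]
    nlinarith [key]
  have hFint : MeasureTheory.IntegrableOn F (Set.Ioc (0:ℝ) 1) :=
    hFcont.integrableOn_Ioc
  have hae : F =ᵐ[MeasureTheory.volume.restrict (Set.Ioc (0:ℝ) 1)] 0 := by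
    rw [← MeasureTheory.integral_eq_zero_iff_of_nonneg_ae _ hFint]
    · exact hIF
    · rw [Filter.EventuallyLE, MeasureTheory.ae_restrict_iff' measurableSet_Ioc]
      filter_upwards with x hx
      simpa using hFnn x hx
  -- the zero set of F inside Ioc 0 1 has full measure, hence is infinite
  have hzero : MeasureTheory.volume ({x | F x ≠ 0} ∩ Set.Ioc (0:ℝ) 1) = 0 := by
    have := hae
    rw [Filter.EventuallyEq, MeasureTheory.ae_iff] at this
    rwa [MeasureTheory.Measure.restrict_apply' measurableSet_Ioc] at this
  have hinf : {x : ℝ | s.eval x = 0}.Infinite := by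
    by_contra hfin
    rw [Set.not_infinite] at hfin
    have hZ0 : MeasureTheory.volume {x : ℝ | s.eval x = 0} = 0 :=
      hfin.measure_zero _
    have hsub : Set.Ioc (0:ℝ) 1 ⊆
        {x : ℝ | s.eval x = 0} ∪ ({x | F x ≠ 0} ∩ Set.Ioc (0:ℝ) 1) := by
      intro x hx
      by_cases h : s.eval x = 0
      · exact Or.inl h
      · exact Or.inr ⟨by simp [hF, h], hx⟩
    have := MeasureTheory.measure_mono (μ := MeasureTheory.volume) hsub
    have hle := this.trans (MeasureTheory.measure_union_le _ _)
    rw [hZ0, hzero, add_zero, Real.volume_Ioc] at hle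
    norm_num at hle
  have hs0 : s = 0 := by
    apply Polynomial.eq_zero_of_infinite_isRoot
    exact hinf.mono (fun x hx => hx)
  rcases mul_eq_zero.mp (hs ▸ hs0 : q * r = 0) with h | h
  · exact h
  · exact absurd h hrz
end
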